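/- In the right half-plane K = {w ∈ ℂ : Re w > 0} with hyperbolic metric ρ, let a = 1, f_n(w) = w + 1/n², and z_n = 1/n for n = 1, 2, …. Then exp(ρ(z_n, a)) = n, and there exists a constant λ > 1 such that for all n: (1/λ)·(1/n) ≤ ρ(f_n(z_n), z_n) ≤ λ·(1/n), (1/λ)·(1/n²) ≤ ρ(f_n(a), a) ≤ λ·(1/n²), and consequently (1/λ²)·exp(ρ(z_n,a)) ≤ ρ(f_n(z_n), z_n)/ρ(f_n(a), a) ≤ λ²·exp(ρ(z_n,a)). -/

import Mathlib

open Complex Metric Set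

/-- The hyperbolic metric on the open right half-plane `{w : Re w > 0}`:
`ρ(u,v) = 2 · arsinh (|u − v| / (2·√(Re u · Re v)))`. -/
noncomputable def rhoK (u v : ℂ) : ℝ :=
  2 * Real.arsinh (‖u - v‖ / (2 * Real.sqrt (u.re * v.re)))

lemma my_arsinh_le (x : ℝ) (hx : 0 ≤ x) : Real.arsinh x ≤ x := by
  rcases eq_or_lt_of_le hx with h | h
  · simp [← h]
  · have := (Real.self_lt_sinh_iff.mpr h).le
    calc Real.arsinh x ≤ Real.arsinh (Real.sinh x) := Real.arsinh_le_arsinh.mpr this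
    _ = x := Real.arsinh_sinh x

lemma my_le_arsinh (x : ℝ) (hx : 0 ≤ x) (hx1 : x ≤ 1) : x / 2 ≤ Real.arsinh x := by
  have h1 : Real.sinh (x/2) ≤ x := by
    rw [Real.sinh_eq]
    have t0 : (0:ℝ) ≤ x/2 := by linarith
    have t1 : x/2 ≤ 1/2 := by linarith
    have he1 : 1 - x/2 ≤ Real.exp (-(x/2)) := by
      have := Real.add_one_le_exp (-(x/2)); linarith
    have hpos : (0:ℝ) < 1 - x/2 := by linarith
    have he2 : Real.exp (x/2) ≤ 1 + 2*(x/2) := by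
      have hinv : Real.exp (x/2) = 1 / Real.exp (-(x/2)) := by
        rw [Real.exp_neg]; field_simp
      rw [hinv]
      have h2 : 1 / Real.exp (-(x/2)) ≤ 1 / (1 - x/2) :=
        one_div_le_one_div_of_le hpos he1
      have h3 : 1 / (1 - x/2) ≤ 1 + 2*(x/2) := by
        rw [div_le_iff₀ hpos]; nlinarith
      linarith
    nlinarith [Real.exp_pos (-(x/2))]
  calc x/2 = Real.arsinh (Real.sinh (x/2)) := (Real.arsinh_sinh _).symm
  _ ≤ Real.arsinh x := Real.arsinh_le_arsinh.mpr h1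

lemma rhoK_ofReal (u v : ℝ) : rhoK (u:ℂ) (v:ℂ)
    = 2 * Real.arsinh (|u - v| / (2 * Real.sqrt (u * v))) := by
  simp [rhoK, ← Complex.ofReal_sub, Complex.norm_real, Real.norm_eq_abs]

/-- Two-sided bound for `2 * arsinh (b / (2 * √c))` when `√c` is sandwiched. -/
lemma rho_bounds {b c lo hi : ℝ} (hb : 0 ≤ b) (hlo : 0 < lo)
    (h1 : lo ≤ Real.sqrt c) (h2 : Real.sqrt c ≤ hi) (hsmall : b / (2*lo) ≤ 1) :
    b / (4*hi) ≤ 2 * Real.arsinh (b / (2 * Real.sqrt c)) ∧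
    2 * Real.arsinh (b / (2 * Real.sqrt c)) ≤ b / lo := by
  have hhi : 0 < hi := lt_of_lt_of_le hlo (le_trans h1 h2)
  have hc : 0 < Real.sqrt c := lt_of_lt_of_le hlo h1
  set t := b / (2 * Real.sqrt c) with ht
  have ht0 : 0 ≤ t := by positivity
  have htle : t ≤ b / (2*lo) :=
    div_le_div_of_nonneg_left hb (by positivity) (by linarith)
  have ht1 : t ≤ 1 := le_trans htle hsmall
  have htlo : b / (2*hi) ≤ t :=
    div_le_div_of_nonneg_left hb (by positivity) (by linarith)
  constructor
  · have h' := my_le_arsinh t ht0 ht1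
    have e : b / (4*hi) = (b / (2*hi)) / 2 := by ring
    rw [e]; nlinarith [htlo]
  · have h' := my_arsinh_le t ht0
    have e : b / lo = 2 * (b / (2*lo)) := by ring
    rw [e]; nlinarith [htle]

/-- In the right half-plane, with `a = 1`, `fₙ(w) = w + 1/n²` and `zₙ = 1/n`:
`exp(ρ(zₙ,a)) = n`, and there is `λ > 1` with
`ρ(fₙ(zₙ),zₙ) ∼ 1/n`, `ρ(fₙ(a),a) ∼ 1/n²`, whence the ratio of the two
displacements is comparable to `exp(ρ(zₙ,a)) = n`. -/
theorem half_plane_example :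
    (∀ n : ℕ, 1 ≤ n → Real.exp (rhoK ((1 : ℂ) / n) 1) = n) ∧
    ∃ lam : ℝ, 1 < lam ∧ ∀ n : ℕ, 1 ≤ n →
      ((1 / lam) * (1 / n) ≤ rhoK ((1 : ℂ) / n + 1 / n ^ 2) ((1 : ℂ) / n) ∧
        rhoK ((1 : ℂ) / n + 1 / n ^ 2) ((1 : ℂ) / n) ≤ lam * (1 / n)) ∧
      ((1 / lam) * (1 / (n : ℝ) ^ 2) ≤ rhoK ((1 : ℂ) + 1 / n ^ 2) 1 ∧
        rhoK ((1 : ℂ) + 1 / n ^ 2) 1 ≤ lam * (1 / (n : ℝ) ^ 2)) ∧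
      ((1 / lam ^ 2) * Real.exp (rhoK ((1 : ℂ) / n) 1) ≤
          rhoK ((1 : ℂ) / n + 1 / n ^ 2) ((1 : ℂ) / n) / rhoK ((1 : ℂ) + 1 / n ^ 2) 1 ∧
        rhoK ((1 : ℂ) / n + 1 / n ^ 2) ((1 : ℂ) / n) / rhoK ((1 : ℂ) + 1 / n ^ 2) 1 ≤
          lam ^ 2 * Real.exp (rhoK ((1 : ℂ) / n) 1)) := by
  have key_exp : ∀ n : ℕ, 1 ≤ n → Real.exp (rhoK ((1 : ℂ) / n) 1) = n := by
    intro n hn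
    have hN : (1:ℝ) ≤ (n:ℝ) := by exact_mod_cast hn
    have hN0 : (0:ℝ) < (n:ℝ) := by linarith
    rw [show (1:ℂ)/n = ((1/(n:ℝ) : ℝ):ℂ) by push_cast; ring,
      show (1:ℂ) = ((1:ℝ):ℂ) by norm_num, rhoK_ofReal]
    set s := Real.sqrt (n:ℝ) with hs
    have hs0 : 0 < s := Real.sqrt_pos.mpr hN0
    have hs2 : s^2 = (n:ℝ) := Real.sq_sqrt hN0.le
    have harg : |1/(n:ℝ) - 1| / (2 * Real.sqrt ((1/(n:ℝ)) * 1)) = Real.sinh (Real.log s) := by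
      rw [Real.sinh_eq, Real.exp_log hs0, Real.exp_neg, Real.exp_log hs0]
      rw [abs_of_nonpos (by rw [sub_nonpos, div_le_one hN0]; exact hN)]
      rw [mul_one, show (1/(n:ℝ)) = (1/s)^2 by rw [div_pow, one_pow, hs2],
        Real.sqrt_sq (by positivity)]
      field_simp
      ring
    rw [harg, Real.arsinh_sinh,
      show 2 * Real.log s = Real.log (s^2) by rw [Real.log_pow]; push_cast; ring,
      Real.exp_log (by positivity), hs2]
  refine ⟨key_exp, 8, by norm_num, fun n hn => ?_⟩
  have hN : (1:ℝ) ≤ (n:ℝ) := by exact_mod_cast hn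
  have hN0 : (0:ℝ) < (n:ℝ) := by linarith
  have hne : (n:ℝ) ≠ 0 := hN0.ne'
  have h32 : 1/(n:ℝ)^3 ≤ 1/(n:ℝ)^2 :=
    div_le_div_of_nonneg_left (by norm_num) (by positivity) (by nlinarith)
  have hA : rhoK ((1 : ℂ) / n + 1 / n ^ 2) ((1 : ℂ) / n)
      = 2 * Real.arsinh ((1/(n:ℝ)^2) / (2 * Real.sqrt ((1/(n:ℝ) + 1/(n:ℝ)^2) * (1/(n:ℝ))))) := by
    rw [show (1:ℂ)/n + 1/n^2 = ((1/(n:ℝ) + 1/(n:ℝ)^2 : ℝ):ℂ) by push_cast; ring,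
      show (1:ℂ)/n = ((1/(n:ℝ) : ℝ):ℂ) by push_cast; ring, rhoK_ofReal]
    have habs : |1/(n:ℝ) + 1/(n:ℝ)^2 - 1/(n:ℝ)| = 1/(n:ℝ)^2 := by
      rw [show (1/(n:ℝ) + 1/(n:ℝ)^2 - 1/(n:ℝ)) = 1/(n:ℝ)^2 by ring]
      exact _root_.abs_of_nonneg (by positivity)
    rw [habs]
  have hB : rhoK ((1 : ℂ) + 1 / n ^ 2) 1
      = 2 * Real.arsinh ((1/(n:ℝ)^2) / (2 * Real.sqrt ((1 + 1/(n:ℝ)^2) * 1))) := by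
    rw [show (1:ℂ) + 1/n^2 = ((1 + 1/(n:ℝ)^2 : ℝ):ℂ) by push_cast; ring,
      show (1:ℂ) = ((1:ℝ):ℂ) by norm_num, rhoK_ofReal]
    have habs : |1 + 1/(n:ℝ)^2 - 1| = 1/(n:ℝ)^2 := by
      rw [show (1 + 1/(n:ℝ)^2 - 1) = 1/(n:ℝ)^2 by ring]
      exact _root_.abs_of_nonneg (by positivity)
    rw [habs]
  have boundsA : (1/(n:ℝ)^2) / (4*(2/(n:ℝ))) ≤ rhoK ((1 : ℂ) / n + 1 / n ^ 2) ((1 : ℂ) / n) ∧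
      rhoK ((1 : ℂ) / n + 1 / n ^ 2) ((1 : ℂ) / n) ≤ (1/(n:ℝ)^2) / (1/(n:ℝ)) := by
    rw [hA]
    apply rho_bounds (by positivity) (by positivity)
    · calc (1/(n:ℝ)) = Real.sqrt ((1/(n:ℝ))^2) := (Real.sqrt_sq (by positivity)).symm
        _ ≤ _ := Real.sqrt_le_sqrt (by
            rw [div_pow, one_pow,
              show ((1/(n:ℝ) + 1/(n:ℝ)^2) * (1/(n:ℝ))) = 1/(n:ℝ)^2 + 1/(n:ℝ)^3 by ring]
            have : (0:ℝ) < 1/(n:ℝ)^3 := by positivity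
            linarith)
    · calc Real.sqrt ((1/(n:ℝ) + 1/(n:ℝ)^2) * (1/(n:ℝ)))
          ≤ Real.sqrt ((2/(n:ℝ))^2) := Real.sqrt_le_sqrt (by
            rw [div_pow,
              show ((1/(n:ℝ) + 1/(n:ℝ)^2) * (1/(n:ℝ))) = 1/(n:ℝ)^2 + 1/(n:ℝ)^3 by ring,
              show ((2:ℝ)^2/(n:ℝ)^2) = 4*(1/(n:ℝ)^2) by ring]
            have : (0:ℝ) < 1/(n:ℝ)^2 := by positivity
            linarith)
        _ = 2/(n:ℝ) := Real.sqrt_sq (by positivity)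
    · rw [div_le_one (by positivity), div_le_iff₀ (by positivity)]
      have hq2 : 2 * (1/(n:ℝ)) * (n:ℝ)^2 = 2 * (n:ℝ) := by field_simp
      rw [hq2]; linarith
  have boundsB : (1/(n:ℝ)^2) / (4*2) ≤ rhoK ((1 : ℂ) + 1 / n ^ 2) 1 ∧
      rhoK ((1 : ℂ) + 1 / n ^ 2) 1 ≤ (1/(n:ℝ)^2) / 1 := by
    rw [hB]
    apply rho_bounds (by positivity) (by norm_num)
    · calc (1:ℝ) = Real.sqrt 1 := Real.sqrt_one.symm
        _ ≤ _ := Real.sqrt_le_sqrt (by nlinarith [div_nonneg (zero_le_one (α := ℝ)) (sq_nonneg (n:ℝ))])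
    · calc Real.sqrt ((1 + 1/(n:ℝ)^2) * 1) ≤ Real.sqrt (2^2) := Real.sqrt_le_sqrt (by
          have h1 : 1/(n:ℝ)^2 ≤ 1 := by
            rw [div_le_one (by positivity)]; nlinarith
          nlinarith)
        _ = 2 := Real.sqrt_sq (by norm_num)
    · rw [div_le_one (by norm_num), div_le_iff₀ (by positivity)]
      nlinarith
  have cA1 : 1/8 * (1/(n:ℝ)) ≤ rhoK ((1 : ℂ) / n + 1 / n ^ 2) ((1 : ℂ) / n) := by
    have e : (1/(n:ℝ)^2) / (4*(2/(n:ℝ))) = 1/8 * (1/(n:ℝ)) := by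
      field_simp; ring
    rw [← e]; exact boundsA.1
  have cA2 : rhoK ((1 : ℂ) / n + 1 / n ^ 2) ((1 : ℂ) / n) ≤ 1/(n:ℝ) := by
    have e : (1/(n:ℝ)^2) / (1/(n:ℝ)) = 1/(n:ℝ) := by
      field_simp
    rw [← e]; exact boundsA.2
  have cB1 : 1/8 * (1/(n:ℝ)^2) ≤ rhoK ((1 : ℂ) + 1 / n ^ 2) 1 := by
    have e : (1/(n:ℝ)^2) / (4*2) = 1/8 * (1/(n:ℝ)^2) := by ring
    rw [← e]; exact boundsB.1
  have cB2 : rhoK ((1 : ℂ) + 1 / n ^ 2) 1 ≤ 1/(n:ℝ)^2 := by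
    have e : (1/(n:ℝ)^2) / 1 = 1/(n:ℝ)^2 := by ring
    rw [← e]; exact boundsB.2
  have hinv1 : (0:ℝ) < 1/(n:ℝ) := by positivity
  have hinv2 : (0:ℝ) < 1/(n:ℝ)^2 := by positivity
  have hq : (n:ℝ) * (1/(n:ℝ)^2) = 1/(n:ℝ) := by field_simp
  have hBpos : 0 < rhoK ((1 : ℂ) + 1 / n ^ 2) 1 := lt_of_lt_of_le (by positivity) cB1
  refine ⟨⟨cA1, by linarith⟩, ⟨cB1, by linarith⟩, ?_, ?_⟩
  · rw [key_exp n hn, le_div_iff₀ hBpos]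
    nlinarith [cA1, cB2, hN0, hq]
  · rw [key_exp n hn, div_le_iff₀ hBpos]
    nlinarith [cA2, cB1, hN0, hq]
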